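/- arXiv:cond-mat/0509689 — 2 statements merged into one kernel-verified Lean document; each statement's English description precedes it below -/
import Mathlib

section
/- The function f(x) = A_q (1 - β(q-1) xᵀC⁻¹x)^{1/(q-1)} on ℝⁿ, with n/(n+2) < q < 1, β = 1/(2q - n(1-q)), C symmetric positive definite, and A_q = Γ(1/(1-q)) (β(1-q))^{n/2} / (Γ(1/(1-q) - n/2) π^{n/2} |C|^{1/2}), is a probability density on ℝⁿ: it is nonnegative and integrates to 1. -/
open MeasureTheory Real Matrix
open Set

lemma beta_Ioo {a c : ℝ} (ha : 0 < a) (hc : 0 < c) :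
    ∫ t in Set.Ioo (0:ℝ) 1, t ^ (a-1) * (1-t) ^ (c-1) =
      Real.Gamma a * Real.Gamma c / Real.Gamma (a+c) := by
  have hG : Real.Gamma (a+c) ≠ 0 := (Real.Gamma_pos_of_pos (by linarith)).ne'
  have h := Complex.Gamma_mul_Gamma_eq_betaIntegral (s := (a:ℂ)) (t := (c:ℂ))
    (by simpa using ha) (by simpa using hc)
  have hbeta : Complex.betaIntegral a c =
      ((∫ t in Set.Ioo (0:ℝ) 1, t ^ (a-1) * (1-t) ^ (c-1) : ℝ) : ℂ) := by
    rw [Complex.betaIntegral, intervalIntegral.integral_of_le zero_le_one,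
      MeasureTheory.integral_Ioc_eq_integral_Ioo,
      show ((∫ t in Set.Ioo (0:ℝ) 1, t ^ (a-1) * (1-t) ^ (c-1) : ℝ) : ℂ) =
        ∫ t in Set.Ioo (0:ℝ) 1, ((t ^ (a-1) * (1-t) ^ (c-1) : ℝ) : ℂ) from integral_ofReal.symm]
    refine setIntegral_congr_fun measurableSet_Ioo fun x hx => ?_
    rw [Complex.ofReal_mul, Complex.ofReal_cpow hx.1.le, Complex.ofReal_cpow (by linarith [hx.2])]
    push_cast
    ring
  rw [hbeta, ← Complex.ofReal_add, Complex.Gamma_ofReal, Complex.Gamma_ofReal,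
    Complex.Gamma_ofReal, ← Complex.ofReal_mul, ← Complex.ofReal_mul] at h
  have := Complex.ofReal_injective h
  field_simp [this]
  rw [this]; ring

lemma beta_Ioi {a c : ℝ} (ha : 0 < a) (hc : 0 < c) :
    ∫ r in Set.Ioi (0:ℝ), r ^ (a-1) * (1+r) ^ (-(a+c)) =
      Real.Gamma a * Real.Gamma c / Real.Gamma (a+c) := by
  have himg : (fun t : ℝ => t / (1 - t)) '' Set.Ioo 0 1 = Set.Ioi 0 := by
    ext r
    constructor
    · rintro ⟨t, ht, rfl⟩
      exact div_pos ht.1 (by linarith [ht.2])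
    · intro hr
      refine ⟨r / (1 + r), ⟨div_pos hr (by linarith [mem_Ioi.mp hr]), ?_⟩, ?_⟩
      · rw [div_lt_one (by linarith [mem_Ioi.mp hr])]; linarith [mem_Ioi.mp hr]
      · have h1 : (0:ℝ) < 1 + r := by linarith [mem_Ioi.mp hr]
        field_simp
        ring
  have hderiv : ∀ t ∈ Set.Ioo (0:ℝ) 1, HasDerivWithinAt (fun t : ℝ => t / (1 - t))
      (((1 - t) ^ 2)⁻¹) (Set.Ioo 0 1) t := by
    intro t ht
    have h0 : (1:ℝ) - t ≠ 0 := by simp only [mem_Ioo] at ht; intro h; linarith [ht.2]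
    have := (hasDerivAt_id t).div ((hasDerivAt_const t (1:ℝ)).sub (hasDerivAt_id t)) h0
    exact this.hasDerivWithinAt.congr_deriv (by simp only [Pi.sub_apply, id_eq]; ring)
  have hinj : Set.InjOn (fun t : ℝ => t / (1 - t)) (Set.Ioo 0 1) := by
    intro s hs t ht h
    simp only [mem_Ioo] at hs ht
    have h1 : (1:ℝ) - s ≠ 0 := by intro h'; linarith [hs.2]
    have h2 : (1:ℝ) - t ≠ 0 := by intro h'; linarith [ht.2]
    field_simp at h
    linarith
  rw [← himg, integral_image_eq_integral_abs_deriv_smul measurableSet_Ioo hderiv hinj]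
  rw [show ∫ t in Set.Ioo (0:ℝ) 1, |((1 - t) ^ 2)⁻¹| •
      ((fun r => r ^ (a-1) * (1+r) ^ (-(a+c))) (t / (1 - t))) =
      ∫ t in Set.Ioo (0:ℝ) 1, t ^ (a-1) * (1-t) ^ (c-1) from ?_, beta_Ioo ha hc]
  refine setIntegral_congr_fun measurableSet_Ioo fun t ht => ?_
  obtain ⟨ht0, ht1⟩ := ht
  have hs : (0:ℝ) < 1 - t := by linarith
  have h1 : 1 + t / (1 - t) = (1 - t)⁻¹ := by field_simp; ring
  have h2 : ((1 - t)⁻¹ : ℝ) ^ (-(a+c)) = (1 - t) ^ (a + c) := by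
    rw [Real.inv_rpow hs.le, ← Real.rpow_neg hs.le, neg_neg]
  have h3 : (t / (1 - t)) ^ (a - 1) = t ^ (a-1) * (1 - t) ^ (-(a-1)) := by
    rw [Real.div_rpow ht0.le hs.le, Real.rpow_neg hs.le, div_eq_mul_inv]
  have h4 : |((1 - t) ^ 2)⁻¹| = (1 - t) ^ (-2 : ℝ) := by
    rw [abs_of_pos (by positivity), ← Real.rpow_natCast (1-t) 2, ← Real.rpow_neg hs.le]
    norm_num
  simp only [smul_eq_mul, h1, h2, h3, h4]
  rw [show (1 - t) ^ (-2:ℝ) * (t ^ (a - 1) * (1 - t) ^ (-(a - 1):ℝ) * (1 - t) ^ (a + c)) =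
      t ^ (a-1) * ((1-t) ^ (-2:ℝ) * (1-t) ^ (-(a-1):ℝ) * (1-t) ^ (a+c)) from by ring,
    ← Real.rpow_add hs, ← Real.rpow_add hs, show (-2:ℝ) + -(a-1) + (a+c) = c - 1 from by ring]

lemma radial_int {n : ℕ} (hn : 1 ≤ n) {b p : ℝ} (hb : 0 < b) (hp : (n:ℝ)/2 < p) :
    ∫ r in Set.Ioi (0:ℝ), r ^ (n - 1 : ℕ) * (1 + b * r ^ 2) ^ (-p) =
      (1/2) * b ^ (-((n:ℝ)/2)) *
        (Real.Gamma ((n:ℝ)/2) * Real.Gamma (p - (n:ℝ)/2) / Real.Gamma p) := by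
  have ha : (0:ℝ) < (n:ℝ)/2 := by positivity
  have hc : (0:ℝ) < p - (n:ℝ)/2 := by linarith
  have himg : (fun u : ℝ => Real.sqrt (u / b)) '' Set.Ioi 0 = Set.Ioi 0 := by
    ext r
    constructor
    · rintro ⟨u, hu, rfl⟩
      exact Real.sqrt_pos.mpr (div_pos (mem_Ioi.mp hu) hb)
    · intro hr
      have hr0 : (0:ℝ) < r := mem_Ioi.mp hr
      refine ⟨b * r ^ 2, mem_Ioi.mpr (by positivity), ?_⟩
      show Real.sqrt ((b * r ^ 2) / b) = r
      rw [mul_comm b (r ^ 2), mul_div_assoc, div_self hb.ne', mul_one,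
        Real.sqrt_sq hr0.le]
  have hderiv : ∀ u ∈ Set.Ioi (0:ℝ), HasDerivWithinAt (fun u : ℝ => Real.sqrt (u / b))
      (1 / (2 * Real.sqrt (u / b)) * b⁻¹) (Set.Ioi 0) u := by
    intro u hu
    have h0 : u / b ≠ 0 := (div_pos (mem_Ioi.mp hu) hb).ne'
    have := (Real.hasDerivAt_sqrt h0).comp u ((hasDerivAt_id u).div_const b)
    exact this.hasDerivWithinAt.congr_deriv (by simp [one_div])
  have hinj : Set.InjOn (fun u : ℝ => Real.sqrt (u / b)) (Set.Ioi 0) := by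
    intro u hu v hv h
    simp only [mem_Ioi] at hu hv
    have h2 : u / b = v / b :=
      (Real.sqrt_inj (div_pos hu hb).le (div_pos hv hb).le).mp h
    field_simp at h2
    exact h2
  rw [← himg, integral_image_eq_integral_abs_deriv_smul measurableSet_Ioi hderiv hinj]
  rw [show ∫ u in Set.Ioi (0:ℝ), |1 / (2 * Real.sqrt (u / b)) * b⁻¹| •
      ((fun r => r ^ (n - 1 : ℕ) * (1 + b * r ^ 2) ^ (-p)) (Real.sqrt (u / b))) =
      ∫ u in Set.Ioi (0:ℝ), (1/2) * b ^ (-((n:ℝ)/2)) *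
        (u ^ ((n:ℝ)/2 - 1) * (1 + u) ^ (-(((n:ℝ)/2) + (p - (n:ℝ)/2)))) from ?_]
  · rw [MeasureTheory.integral_const_mul, beta_Ioi ha hc,
      show ((n:ℝ)/2) + (p - (n:ℝ)/2) = p from by ring]
  refine setIntegral_congr_fun measurableSet_Ioi fun u hu => ?_
  have hu0 : (0:ℝ) < u := mem_Ioi.mp hu
  have hub : (0:ℝ) < u / b := div_pos hu0 hb
  have hsq : Real.sqrt (u / b) ^ (2:ℕ) = u / b := Real.sq_sqrt hub.le
  have hbase : 1 + b * Real.sqrt (u / b) ^ (2:ℕ) = 1 + u := by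
    rw [hsq, mul_div_cancel₀ _ hb.ne']
  have hpow : Real.sqrt (u / b) ^ (n - 1 : ℕ) = (u/b) ^ (((n:ℝ) - 1)/2) := by
    rw [Real.sqrt_eq_rpow, ← Real.rpow_natCast ((u/b) ^ ((1:ℝ)/2)) (n-1),
      ← Real.rpow_mul hub.le, Nat.cast_sub hn, Nat.cast_one]
    ring_nf
  have habs : |1 / (2 * Real.sqrt (u / b)) * b⁻¹| =
      (1/2) * (u/b) ^ (-(1:ℝ)/2) * b⁻¹ := by
    have hx : (0:ℝ) < (u/b) ^ ((1:ℝ)/2) := Real.rpow_pos_of_pos hub _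
    rw [abs_of_pos (by positivity), Real.sqrt_eq_rpow, neg_div, Real.rpow_neg hub.le]
    field_simp
  simp only [smul_eq_mul, hbase, hpow, habs]
  have hub' : (u/b) ^ (((n:ℝ) - 1)/2) * (u/b) ^ (-(1:ℝ)/2) = (u/b) ^ ((n:ℝ)/2 - 1) := by
    rw [← Real.rpow_add hub]; ring_nf
  have hsplit : (u/b) ^ ((n:ℝ)/2 - 1) = u ^ ((n:ℝ)/2 - 1) * b ^ (-((n:ℝ)/2 - 1)) := by
    rw [Real.div_rpow hu0.le hb.le, Real.rpow_neg hb.le, div_eq_mul_inv]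
  have hbpow : b ^ (-((n:ℝ)/2 - 1)) * b⁻¹ = b ^ (-((n:ℝ)/2)) := by
    rw [← Real.rpow_neg_one b, ← Real.rpow_add hb]; ring_nf
  calc (1/2) * (u/b) ^ (-(1:ℝ)/2) * b⁻¹ * ((u/b) ^ (((n:ℝ) - 1)/2) * (1 + u) ^ (-p))
      = (1/2) * ((u/b) ^ (((n:ℝ) - 1)/2) * (u/b) ^ (-(1:ℝ)/2)) * b⁻¹ * (1 + u) ^ (-p) := by ring
    _ = (1/2) * (u ^ ((n:ℝ)/2 - 1) * (b ^ (-((n:ℝ)/2 - 1)) * b⁻¹)) * (1 + u) ^ (-p) := by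
        rw [hub', hsplit]; ring
    _ = (1/2) * b ^ (-((n:ℝ)/2)) * (u ^ ((n:ℝ)/2 - 1) * (1 + u) ^ (-(((n:ℝ)/2) + (p - (n:ℝ)/2)))) := by
        rw [hbpow, show ((n:ℝ)/2) + (p - (n:ℝ)/2) = p from by ring]; ring

lemma euclid_int {n : ℕ} (hn : 1 ≤ n) {b p : ℝ} (hb : 0 < b) (hp : (n:ℝ)/2 < p) :
    ∫ x : EuclideanSpace ℝ (Fin n), (1 + b * ‖x‖ ^ 2) ^ (-p) =
      Real.pi ^ ((n:ℝ)/2) * b ^ (-((n:ℝ)/2)) *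
        (Real.Gamma (p - (n:ℝ)/2) / Real.Gamma p) := by
  have hn0 : (0:ℝ) < n := by exact_mod_cast hn
  have hp0 : (0:ℝ) < p := by linarith
  haveI : Nonempty (Fin n) := Fin.pos_iff_nonempty.mp hn
  haveI : Nontrivial (EuclideanSpace ℝ (Fin n)) := by
    have : 0 < Module.finrank ℝ (EuclideanSpace ℝ (Fin n)) := by
      rw [finrank_euclideanSpace, Fintype.card_fin]; exact hn
    exact Module.nontrivial_of_finrank_pos this
  have hdim : Module.finrank ℝ (EuclideanSpace ℝ (Fin n)) = n := by
    rw [finrank_euclideanSpace, Fintype.card_fin]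
  have hvol : (volume (Metric.ball (0 : EuclideanSpace ℝ (Fin n)) 1)).toReal =
      Real.pi ^ ((n:ℝ)/2) / Real.Gamma ((n:ℝ)/2 + 1) := by
    rw [EuclideanSpace.volume_ball, Fintype.card_fin]
    rw [ENNReal.ofReal_one, one_pow, one_mul, ENNReal.toReal_ofReal (by positivity)]
    congr 1
    rw [← Real.rpow_natCast (Real.sqrt Real.pi) n, Real.sqrt_eq_rpow,
      ← Real.rpow_mul Real.pi_pos.le]
    ring_nf
  have key := integral_fun_norm_addHaar (volume : Measure (EuclideanSpace ℝ (Fin n)))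
    (fun r : ℝ => (1 + b * r ^ 2) ^ (-p))
  rw [hdim, measureReal_def, hvol] at key
  rw [key]
  have : ∫ y in Set.Ioi (0:ℝ), y ^ (n - 1 : ℕ) • ((1 + b * y ^ 2) ^ (-p)) =
      (1/2) * b ^ (-((n:ℝ)/2)) *
        (Real.Gamma ((n:ℝ)/2) * Real.Gamma (p - (n:ℝ)/2) / Real.Gamma p) := by
    simp only [smul_eq_mul]
    exact radial_int hn hb hp
  rw [this]
  have hGn : Real.Gamma ((n:ℝ)/2 + 1) = ((n:ℝ)/2) * Real.Gamma ((n:ℝ)/2) := by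
    rw [Real.Gamma_add_one (by positivity)]
  have hG2 : Real.Gamma ((n:ℝ)/2) ≠ 0 := (Real.Gamma_pos_of_pos (by positivity)).ne'
  have hGp : Real.Gamma p ≠ 0 := (Real.Gamma_pos_of_pos hp0).ne'
  rw [nsmul_eq_mul, smul_eq_mul, hGn]
  field_simp

lemma pi_int {n : ℕ} (hn : 1 ≤ n) {b p : ℝ} (hb : 0 < b) (hp : (n:ℝ)/2 < p) :
    ∫ y : Fin n → ℝ, (1 + b * (y ⬝ᵥ y)) ^ (-p) =
      Real.pi ^ ((n:ℝ)/2) * b ^ (-((n:ℝ)/2)) *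
        (Real.Gamma (p - (n:ℝ)/2) / Real.Gamma p) := by
  rw [← euclid_int hn hb hp]
  have := (EuclideanSpace.volume_preserving_symm_measurableEquiv_toLp (Fin n)).symm
  rw [← this.map_eq, integral_map_equiv]
  refine integral_congr_ae (Filter.Eventually.of_forall fun y => ?_)
  have hnorm : ‖(MeasurableEquiv.toLp 2 (Fin n → ℝ)) y‖ ^ 2 = ∑ i, y i ^ 2 := by
    rw [EuclideanSpace.norm_eq, Real.sq_sqrt (by positivity)]
    simp [Real.norm_eq_abs, sq_abs]
  show (1 + b * (y ⬝ᵥ y)) ^ (-p) =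
    (1 + b * ‖(MeasurableEquiv.toLp 2 (Fin n → ℝ)) y‖ ^ 2) ^ (-p)
  rw [hnorm]
  simp [dotProduct, sq]

lemma mulVec_int {n : ℕ} (S : Matrix (Fin n) (Fin n) ℝ) (hS : S.det ≠ 0)
    (g : (Fin n → ℝ) → ℝ) (hg : Measurable g) :
    ∫ x : Fin n → ℝ, g (S.mulVec x) = |S.det|⁻¹ * ∫ y : Fin n → ℝ, g y := by
  have hmap := Real.map_matrix_volume_pi_eq_smul_volume_pi hS
  have hφ : Measurable (Matrix.toLin' S) := (Matrix.toLin' S).continuous_on_pi.measurable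
  have h1 : ∫ y : Fin n → ℝ, g y ∂(Measure.map (Matrix.toLin' S) volume) =
      ∫ x : Fin n → ℝ, g ((Matrix.toLin' S) x) :=
    integral_map hφ.aemeasurable (hg.aestronglyMeasurable)
  rw [hmap, integral_smul_measure, ENNReal.toReal_ofReal (by positivity)] at h1
  have h2 : ∀ x, (Matrix.toLin' S) x = S.mulVec x := fun x => Matrix.toLin'_apply S x
  simp only [h2] at h1
  rw [← h1, abs_inv, smul_eq_mul]

/-- For `n/(n+2) < q < 1`, the Tsallis density
`f(x) = A_q (1 - β(q-1) xᵀC⁻¹x)^{1/(q-1)}` is a probability density on `ℝⁿ`: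
it is nonnegative and integrates to 1. -/
theorem tsallis_q_lt_one_is_density (n : ℕ) (hn : 1 ≤ n) (q : ℝ)
    (hq1 : (n : ℝ) / (n + 2) < q) (hq2 : q < 1)
    (C : Matrix (Fin n) (Fin n) ℝ) (hCsymm : C.IsSymm) (hC : C.PosDef)
    (β Aq : ℝ)
    (hβ : β = 1 / (2 * q - n * (1 - q)))
    (hA : Aq = Real.Gamma (1 / (1 - q)) * (β * (1 - q)) ^ ((n : ℝ) / 2) /
        (Real.Gamma (1 / (1 - q) - n / 2) * Real.pi ^ ((n : ℝ) / 2) * Real.sqrt C.det)) :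
    (∀ x : Fin n → ℝ,
        0 ≤ Aq * (1 - β * (q - 1) * (x ⬝ᵥ C⁻¹.mulVec x)) ^ (1 / (q - 1))) ∧
    ∫ x : Fin n → ℝ,
        Aq * (1 - β * (q - 1) * (x ⬝ᵥ C⁻¹.mulVec x)) ^ (1 / (q - 1)) = 1 := by
  have hn0 : (0:ℝ) < n := by exact_mod_cast hn
  have hn2 : (0:ℝ) < (n:ℝ) + 2 := by linarith
  have hq1' : (n:ℝ) < q * ((n:ℝ) + 2) := by
    have := (div_lt_iff₀ hn2).mp hq1; linarith
  have h1q : (0:ℝ) < 1 - q := by linarith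
  have hden : (0:ℝ) < 2 * q - n * (1 - q) := by nlinarith
  have hβpos : 0 < β := hβ ▸ by positivity
  set p : ℝ := 1 / (1 - q) with hpdef
  have hp0 : 0 < p := by positivity
  set b : ℝ := β * (1 - q) with hbdef
  have hb : 0 < b := by positivity
  have hpn : (n:ℝ)/2 < p := by
    rw [hpdef, div_lt_div_iff₀ (by norm_num) h1q]
    nlinarith
  clear_value p b
  -- matrix setup
  have hM : (C⁻¹).PosDef := hC.inv
  have hMsd : (C⁻¹).PosSemidef := hM.posSemidef
  set S : Matrix (Fin n) (Fin n) ℝ := (by open scoped MatrixOrder in exact CFC.sqrt (C⁻¹)) with hSdef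
  have hSS : S * S = C⁻¹ := by open scoped MatrixOrder in exact CFC.sqrt_mul_sqrt_self _ hMsd.nonneg
  have hSsd : S.PosSemidef := by open scoped MatrixOrder in exact (CFC.sqrt_nonneg _).posSemidef
  have hSsymm : Sᵀ = S := by
    rw [← Matrix.conjTranspose_eq_transpose_of_trivial]
    exact hSsd.isHermitian
  have hdetC : (0:ℝ) < C.det := hC.det_pos
  have hdetS2 : S.det * S.det = C.det⁻¹ := by
    rw [← Matrix.det_mul, hSS, Matrix.det_nonsing_inv, Ring.inverse_eq_inv']
  have hdetS : S.det ≠ 0 := by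
    intro h
    rw [h, mul_zero] at hdetS2
    exact (inv_pos.mpr hdetC).ne (by rw [← hdetS2])
  have habs : |S.det|⁻¹ = Real.sqrt C.det := by
    rw [← Real.sqrt_mul_self_eq_abs, hdetS2, Real.sqrt_inv, inv_inv]
  clear_value S
  -- quadratic form
  have hquad : ∀ x : Fin n → ℝ, x ⬝ᵥ C⁻¹.mulVec x = (S.mulVec x) ⬝ᵥ (S.mulVec x) := by
    intro x
    rw [← hSS, ← Matrix.mulVec_mulVec, Matrix.dotProduct_mulVec, ← Matrix.mulVec_transpose,
      hSsymm]
  have hQnonneg : ∀ x : Fin n → ℝ, 0 ≤ x ⬝ᵥ C⁻¹.mulVec x := by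
    intro x
    have := hMsd.re_dotProduct_nonneg x
    simpa using this
  -- rewrite integrand
  have hexp : 1 / (q - 1) = -p := by
    rw [hpdef, show q - 1 = -(1 - q) from by ring, div_neg]
  have hrw : ∀ x : Fin n → ℝ,
      Aq * (1 - β * (q - 1) * (x ⬝ᵥ C⁻¹.mulVec x)) ^ (1 / (q - 1)) =
      Aq * (1 + b * ((S.mulVec x) ⬝ᵥ (S.mulVec x))) ^ (-p) := by
    intro x
    rw [hexp, ← hquad, show 1 - β * (q - 1) * (x ⬝ᵥ C⁻¹.mulVec x) =
      1 + b * (x ⬝ᵥ C⁻¹.mulVec x) from by rw [hbdef]; ring]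
  constructor
  · intro x
    have hbase : 0 ≤ 1 - β * (q - 1) * (x ⬝ᵥ C⁻¹.mulVec x) := by
      nlinarith [hQnonneg x, mul_nonneg hβpos.le (hQnonneg x)]
    have hAq : 0 ≤ Aq := by
      rw [hA]
      have g1 := (Real.Gamma_pos_of_pos hp0).le
      have g2 := (Real.Gamma_pos_of_pos (by linarith : (0:ℝ) < p - n / 2)).le
      positivity
    exact mul_nonneg hAq (Real.rpow_nonneg hbase _)
  · simp_rw [hrw]
    set g : (Fin n → ℝ) → ℝ := fun y => (1 + b * (y ⬝ᵥ y)) ^ (-p) with hgdef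
    have hdot : Continuous fun y : Fin n → ℝ => y ⬝ᵥ y := by
      simp only [dotProduct]
      exact continuous_finset_sum _ fun i _ => ((continuous_apply i).mul (continuous_apply i))
    have hg : Measurable g := by
      refine (Continuous.rpow_const (by continuity) fun y => Or.inl ?_).measurable
      have hq0 : (0:ℝ) ≤ y ⬝ᵥ y := Finset.sum_nonneg fun i _ => mul_self_nonneg _
      positivity

    have : ∫ x : Fin n → ℝ, Aq * g (S.mulVec x) = Aq * ∫ x : Fin n → ℝ, g (S.mulVec x) :=
      MeasureTheory.integral_const_mul _ _
    rw [show (∫ x : Fin n → ℝ, Aq * (1 + b * ((S.mulVec x) ⬝ᵥ (S.mulVec x))) ^ (-p)) =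
      ∫ x : Fin n → ℝ, Aq * g (S.mulVec x) from rfl, this, mulVec_int S hdetS g hg, habs,
      hgdef, pi_int hn hb hpn, hA]
    have hG1 : (0:ℝ) < Real.Gamma p := Real.Gamma_pos_of_pos hp0
    have hG2 : (0:ℝ) < Real.Gamma (p - n / 2) := Real.Gamma_pos_of_pos (by linarith)
    have hP : (0:ℝ) < Real.pi ^ ((n:ℝ)/2) := Real.rpow_pos_of_pos Real.pi_pos _
    have hD : (0:ℝ) < Real.sqrt C.det := Real.sqrt_pos.mpr hdetC
    have hB : (0:ℝ) < b ^ ((n:ℝ)/2) := Real.rpow_pos_of_pos hb _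
    rw [Real.rpow_neg hb.le]
    have hG2' : Real.Gamma ((p * 2 - (n:ℝ)) / 2) ≠ 0 := by
      rw [show (p * 2 - (n:ℝ)) / 2 = p - (n:ℝ)/2 from by ring]; exact hG2.ne'
    field_simp [hG1.ne', hG2.ne', hG2', hP.ne', hD.ne', hB.ne']
    ring_nf
    exact mul_inv_cancel₀ (by rw [show p + (n:ℝ) * (-1 / 2) = p - n / 2 by ring]; exact hG2.ne')
end

section
/- Let N and E be such that N/|Λ| → ρ and E/|Λ| → e as |Λ| → ∞ with N₀ fixed. Then the densities ν_Λ(q₁,...,q_{N₀}) ∝ (E - Σ_{i=1}^{N₀}(1/2)m‖qᵢ‖²)_+^{(3/2)(N-N₀)-1}, suitably normalized, converge pointwise to the Maxwell–Boltzmann density proportional to exp(-(3ρ/(2e)) Σ_{i=1}^{N₀} (1/2)m‖qᵢ‖²). -/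
open MeasureTheory Real Filter

lemma gauss_integrable_aux (n : ℕ) (b : ℝ) (hb : 0 < b) :
    Integrable (fun x : Fin n → ℝ => Real.exp (-∑ i, b * x i ^ 2)) := by
  have h : (fun x : Fin n → ℝ => Real.exp (-∑ i, b * x i ^ 2))
      = fun x => ∏ i, Real.exp (-(b * x i ^ 2)) := by
    funext x
    rw [← Real.exp_sum, Finset.sum_neg_distrib]
  rw [h]
  exact Integrable.fintype_prod (f := fun _ : Fin n => fun t : ℝ => Real.exp (-(b * t ^ 2)))
    fun i => by simpa [neg_mul] using integrable_exp_neg_mul_sq hb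

lemma gauss_integrable_aux' (n : ℕ) (c b : ℝ) (hc : 0 < c) (hb : 0 < b) :
    Integrable (fun x : Fin n → ℝ => Real.exp (-c * ∑ i, b * x i ^ 2)) := by
  have h : (fun x : Fin n → ℝ => Real.exp (-c * ∑ i, b * x i ^ 2))
      = fun x => Real.exp (-∑ i, (c * b) * x i ^ 2) := by
    funext x
    congr 1
    rw [Finset.mul_sum, ← Finset.sum_neg_distrib]
    exact Finset.sum_congr rfl fun i _ => by ring
  rw [h]
  exact gauss_integrable_aux n (c * b) (by positivity)

lemma pow_tendsto_exp_aux (Eseq α : ℕ → ℝ) (β t : ℝ)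
    (hE : Tendsto Eseq atTop atTop)
    (hαE : Tendsto (fun j => α j / Eseq j) atTop (nhds β)) :
    Tendsto (fun j => (max 0 (1 - t / Eseq j)) ^ α j) atTop (nhds (Real.exp (-(β * t)))) := by
  have hEpos : ∀ᶠ j in atTop, 0 < Eseq j := hE.eventually_gt_atTop 0
  have hinv : Tendsto (fun j => (Eseq j)⁻¹) atTop (nhds 0) := tendsto_inv_atTop_zero.comp hE
  have hinv' : Tendsto (fun j => (Eseq j)⁻¹) atTop (nhdsWithin 0 {(0:ℝ)}ᶜ) := by
    rw [tendsto_nhdsWithin_iff]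
    exact ⟨hinv, hEpos.mono fun j hj => by simp [inv_ne_zero hj.ne']⟩
  have hd : HasDerivAt (fun s : ℝ => Real.log (1 - t * s)) (-t) 0 := by
    have h1 : HasDerivAt (fun s : ℝ => 1 - t * s) (-t) 0 := by
      simpa using ((hasDerivAt_id (0:ℝ)).const_mul t).const_sub 1
    have h2 := h1.log (by norm_num : (1:ℝ) - t * 0 ≠ 0)
    simpa using h2
  have hslope := hasDerivAt_iff_tendsto_slope.mp hd
  have hcomp : Tendsto (fun j => slope (fun s : ℝ => Real.log (1 - t * s)) 0 ((Eseq j)⁻¹))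
      atTop (nhds (-t)) := hslope.comp hinv'
  have hlog : Tendsto (fun j => α j * Real.log (1 - t / Eseq j)) atTop (nhds (-(β * t))) := by
    have hmul := hαE.mul hcomp
    rw [show β * -t = -(β * t) by ring] at hmul
    refine hmul.congr' ?_
    filter_upwards [hEpos] with j hj
    have hEne : Eseq j ≠ 0 := hj.ne'
    rw [slope_def_field]
    field_simp
    simp [Real.log_one, div_eq_mul_inv, mul_inv_cancel₀ hEne]
  have hsmall : ∀ᶠ j in atTop, t / Eseq j < 1 := by
    have : Tendsto (fun j => t / Eseq j) atTop (nhds 0) := by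
      simpa [div_eq_mul_inv] using hinv.const_mul t
    exact this.eventually_lt_const one_pos
  have hfinal := (Real.continuous_exp.tendsto _).comp hlog
  refine hfinal.congr' ?_
  filter_upwards [hsmall] with j hj
  have hpos : 0 < 1 - t / Eseq j := by linarith
  rw [Function.comp_apply, max_eq_right hpos.le, Real.rpow_def_of_pos hpos, mul_comm]


/-- Thermodynamic limit: with `N/|Λ| → ρ > 0` and `E/|Λ| → e > 0` as `|Λ| → ∞`
(`N₀` fixed), the normalized microcanonical marginal densities
`ν_Λ ∝ (E - Σ_{i≤N₀}(m/2)‖qᵢ‖²)₊^{(3/2)(N-N₀)-1}` converge pointwise to the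
Maxwell–Boltzmann density proportional to `exp(-(3ρ/(2e)) Σ_{i≤N₀}(m/2)‖qᵢ‖²)`. -/
theorem thermodynamic_limit_boltzmann (N₀ : ℕ) (hN₀ : 1 ≤ N₀) (m ρ e : ℝ)
    (hm : 0 < m) (hρ : 0 < ρ) (he : 0 < e)
    (Λ : ℕ → ℝ) (Nseq : ℕ → ℕ) (Eseq : ℕ → ℝ)
    (hΛ : Tendsto Λ atTop atTop)
    (hNΛ : Tendsto (fun j => (Nseq j : ℝ) / Λ j) atTop (nhds ρ))
    (hEΛ : Tendsto (fun j => Eseq j / Λ j) atTop (nhds e))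
    (hN : ∀ j, N₀ < Nseq j)
    (ν : ℕ → (Fin (3 * N₀) → ℝ) → ℝ)
    (hν : ν = fun j x =>
      (max 0 (Eseq j - ∑ i, (m / 2) * x i ^ 2)) ^ ((3 / 2 : ℝ) * ((Nseq j : ℝ) - N₀) - 1)) :
    ∀ x : Fin (3 * N₀) → ℝ,
      Tendsto (fun j => ν j x / ∫ y : Fin (3 * N₀) → ℝ, ν j y) atTop
        (nhds (Real.exp (-(3 * ρ / (2 * e)) * ∑ i, (m / 2) * x i ^ 2) /
          ∫ y : Fin (3 * N₀) → ℝ, Real.exp (-(3 * ρ / (2 * e)) * ∑ i, (m / 2) * y i ^ 2))) := by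
  intro x
  -- notation
  set S : (Fin (3 * N₀) → ℝ) → ℝ := fun y => ∑ i, (m / 2) * y i ^ 2 with hS
  set β : ℝ := 3 * ρ / (2 * e) with hβdef
  set α : ℕ → ℝ := fun j => (3 / 2 : ℝ) * ((Nseq j : ℝ) - N₀) - 1 with hαdef
  have hβ : 0 < β := by rw [hβdef]; positivity
  have hS0 : ∀ y, 0 ≤ S y := fun y => Finset.sum_nonneg fun i _ => by positivity
  have hScont : Continuous S :=
    continuous_finset_sum _ fun i _ => (continuous_const.mul ((continuous_apply i).pow 2))
  have hα0 : ∀ j, 0 < α j := by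
    intro j
    have h1 : (N₀ : ℝ) + 1 ≤ (Nseq j : ℝ) := by exact_mod_cast hN j
    rw [hαdef]
    simp only
    nlinarith
  -- E_j → ∞
  have hΛpos : ∀ᶠ j in atTop, 0 < Λ j := hΛ.eventually_gt_atTop 0
  have hE : Tendsto Eseq atTop atTop := by
    refine (Tendsto.pos_mul_atTop he hEΛ hΛ).congr' ?_
    filter_upwards [hΛpos] with j hj
    exact div_mul_cancel₀ _ hj.ne'
  have hEpos : ∀ᶠ j in atTop, 0 < Eseq j := hE.eventually_gt_atTop 0
  -- α_j / E_j → β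
  have hαE : Tendsto (fun j => α j / Eseq j) atTop (nhds β) := by
    have hΛE : Tendsto (fun j => Λ j / Eseq j) atTop (nhds e⁻¹) := by
      have := (hEΛ.inv₀ he.ne').congr fun j => by rw [inv_div]
      exact this
    have hΛinv : Tendsto (fun j => (Λ j)⁻¹) atTop (nhds 0) := tendsto_inv_atTop_zero.comp hΛ
    have hαΛ : Tendsto (fun j => α j / Λ j) atTop (nhds ((3 / 2) * ρ)) := by
      have h1 := (hNΛ.const_mul (3 / 2 : ℝ)).sub (hΛinv.const_mul ((3 / 2 : ℝ) * N₀ + 1))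
      rw [mul_zero, sub_zero] at h1
      refine h1.congr fun j => ?_
      rw [hαdef]
      simp only [div_eq_mul_inv]
      ring
    have hmul := hαΛ.mul hΛE
    have hlim : (3 / 2 : ℝ) * ρ * e⁻¹ = β := by
      rw [hβdef]; field_simp
    rw [hlim] at hmul
    refine hmul.congr' ?_
    filter_upwards [hΛpos] with j hj
    rw [div_mul_div_comm, mul_comm (α j) (Λ j), mul_div_mul_left _ _ hj.ne']
  -- pointwise convergence of F j y
  have hpt : ∀ y, Tendsto (fun j => (max 0 (1 - S y / Eseq j)) ^ α j) atTop
      (nhds (Real.exp (-β * S y))) := by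
    intro y
    have := pow_tendsto_exp_aux Eseq α β (S y) hE hαE
    rwa [show -(β * S y) = -β * S y by ring] at this
  -- dominated convergence
  have hbound_int : Integrable (fun y : Fin (3 * N₀) → ℝ => Real.exp (-(β / 2) * S y)) := by
    rw [hS]
    exact gauss_integrable_aux' (3 * N₀) (β / 2) (m / 2) (by positivity) (by positivity)
  have hlim_int : Integrable (fun y : Fin (3 * N₀) → ℝ => Real.exp (-β * S y)) := by
    rw [hS]
    exact gauss_integrable_aux' (3 * N₀) β (m / 2) hβ (by positivity)
  have hbig : ∀ᶠ j in atTop, β / 2 < α j / Eseq j := hαE.eventually_const_lt (by linarith)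
  have hIntTendsto : Tendsto (fun j => ∫ y, (max 0 (1 - S y / Eseq j)) ^ α j) atTop
      (nhds (∫ y, Real.exp (-β * S y))) := by
    refine tendsto_integral_filter_of_dominated_convergence
      (fun y => Real.exp (-(β / 2) * S y)) ?_ ?_ hbound_int (ae_of_all _ hpt)
    · filter_upwards with j
      refine Continuous.aestronglyMeasurable ?_
      refine Continuous.rpow_const ?_ fun y => Or.inr (hα0 j).le
      exact continuous_const.max (continuous_const.sub (hScont.div_const _))
    · filter_upwards [hbig, hEpos] with j hj hEj
      refine ae_of_all _ fun y => ?_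
      have hnn : (0 : ℝ) ≤ (max 0 (1 - S y / Eseq j)) ^ α j :=
        Real.rpow_nonneg (le_max_left _ _) _
      rw [Real.norm_eq_abs, abs_of_nonneg hnn]
      have h1 : max 0 (1 - S y / Eseq j) ≤ Real.exp (-(S y / Eseq j)) := by
        refine max_le (Real.exp_pos _).le ?_
        have := Real.add_one_le_exp (-(S y / Eseq j))
        linarith
      have h2 : (max 0 (1 - S y / Eseq j)) ^ α j ≤ (Real.exp (-(S y / Eseq j))) ^ α j :=
        Real.rpow_le_rpow (le_max_left _ _) h1 (hα0 j).le
      refine h2.trans ?_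
      rw [← Real.exp_mul]
      refine Real.exp_le_exp.mpr ?_
      have h3 : β / 2 * S y ≤ α j / Eseq j * S y :=
        mul_le_mul_of_nonneg_right hj.le (hS0 y)
      have h4 : -(S y / Eseq j) * α j = -(α j / Eseq j * S y) := by ring
      rw [h4]
      linarith
  -- positivity of limit integral
  have hpos : 0 < ∫ y, Real.exp (-β * S y) := by
    rw [integral_pos_iff_support_of_nonneg_ae
      (ae_of_all _ fun y => (Real.exp_pos _).le) hlim_int]
    have hsupp : Function.support (fun y : Fin (3 * N₀) → ℝ => Real.exp (-β * S y))
        = Set.univ := Set.eq_univ_of_forall fun y => (Real.exp_pos _).ne'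
    rw [hsupp]
    exact isOpen_univ.measure_pos volume ⟨0, trivial⟩
  -- combine
  have hmain : Tendsto
      (fun j => (max 0 (1 - S x / Eseq j)) ^ α j / ∫ y, (max 0 (1 - S y / Eseq j)) ^ α j)
      atTop (nhds (Real.exp (-β * S x) / ∫ y, Real.exp (-β * S y))) :=
    (hpt x).div hIntTendsto hpos.ne'
  refine hmain.congr' ?_
  filter_upwards [hEpos] with j hEj
  have hc : (0 : ℝ) < Eseq j ^ α j := Real.rpow_pos_of_pos hEj _
  have hkey : ∀ y, ν j y = Eseq j ^ α j * (max 0 (1 - S y / Eseq j)) ^ α j := by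
    intro y
    rw [hν]
    simp only
    rw [← Real.mul_rpow hEj.le (le_max_left _ _)]
    congr 1
    rw [mul_max_of_nonneg _ _ hEj.le, mul_zero, mul_one_sub, mul_div_cancel₀ _ hEj.ne']
  have hint : ∫ y, ν j y = Eseq j ^ α j * ∫ y, (max 0 (1 - S y / Eseq j)) ^ α j := by
    simp_rw [hkey]
    exact integral_const_mul _ _
  rw [hkey x, hint, mul_div_mul_left _ _ hc.ne']
end
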